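/- The commutative ring $R_\Theta := \mathbb{Z}[X_1,X_2]/(X_1^2X_2 + X_1X_2^2,\; X_1^2 + X_2^2 + X_1X_2)$ is a free $\mathbb{Z}$-module of rank 6; the residue classes of the monomials $1,\, X_1,\, X_2,\, X_1^2,\, X_1X_2,\, X_1^2X_2$ form a $\mathbb{Z}$-basis. -/

import Mathlib

open MvPolynomial

noncomputable section

/-- The defining ideal of the graph ring of the planar theta graph. -/
abbrev thetaIdeal : Ideal (MvPolynomial (Fin 2) ℤ) :=
  Ideal.span {X 0 ^ 2 * X 1 + X 0 * X 1 ^ 2, X 0 ^ 2 + X 1 ^ 2 + X 0 * X 1}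

/-- The graph ring `R_Θ = ℤ[X₁,X₂]/(X₁²X₂ + X₁X₂², X₁² + X₂² + X₁X₂)` of the
planar theta graph. -/
abbrev RTheta := MvPolynomial (Fin 2) ℤ ⧸ thetaIdeal

/-- normal form coordinates of `x^a y^b` in the basis `1, x, y, x², xy, x²y`. -/
def nf : ℕ → ℕ → Fin 6 → ℤ
  | 0, 0 => ![1,0,0,0,0,0]
  | 1, 0 => ![0,1,0,0,0,0]
  | 0, 1 => ![0,0,1,0,0,0]
  | 2, 0 => ![0,0,0,1,0,0]
  | 1, 1 => ![0,0,0,0,1,0]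
  | 2, 1 => ![0,0,0,0,0,1]
  | 0, 2 => ![0,0,0,-1,-1,0]
  | 1, 2 => ![0,0,0,0,0,-1]
  | _, _ => 0

lemma nfid1 (a b : ℕ) : nf (a+2) (b+1) + nf (a+1) (b+2) = 0 := by
  rcases a with _|_|a <;> rcases b with _|b <;>
    funext i <;> fin_cases i <;> simp [nf] <;> decide

lemma nfid2 (a b : ℕ) : nf (a+2) b + nf a (b+2) + nf (a+1) (b+1) = 0 := by
  rcases a with _|_|a <;> rcases b with _|_|b <;>
    funext i <;> fin_cases i <;> simp [nf] <;> decide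

def phi0 : MvPolynomial (Fin 2) ℤ →ₗ[ℤ] (Fin 6 → ℤ) :=
  (MvPolynomial.basisMonomials (Fin 2) ℤ).constr ℤ (fun d => nf (d 0) (d 1))

lemma phi0_monomial (d : Fin 2 →₀ ℕ) : phi0 (monomial d 1) = nf (d 0) (d 1) := by
  have := (MvPolynomial.basisMonomials (Fin 2) ℤ).constr_basis ℤ (fun d => nf (d 0) (d 1)) d
  rwa [MvPolynomial.coe_basisMonomials] at this

lemma phi0_pow (a b : ℕ) : phi0 (X 0 ^ a * X 1 ^ b) = nf a b := by
  have h : (X 0 ^ a * X 1 ^ b : MvPolynomial (Fin 2) ℤ)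
      = monomial (Finsupp.single 0 a + Finsupp.single 1 b) 1 := by
    rw [X_pow_eq_monomial, X_pow_eq_monomial, monomial_mul, one_mul]
  rw [h, phi0_monomial]
  simp [Finsupp.single_apply]

lemma phi0_mono_shift (d : Fin 2 →₀ ℕ) (u v : ℕ) :
    phi0 (monomial d 1 * (X 0 ^ u * X 1 ^ v)) = nf (d 0 + u) (d 1 + v) := by
  rw [X_pow_eq_monomial, X_pow_eq_monomial, monomial_mul, one_mul, monomial_mul, one_mul,
    phi0_monomial]
  congr 1 <;> simp [Finsupp.single_apply]

lemma phi0_kill1 (p : MvPolynomial (Fin 2) ℤ) :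
    phi0 (p * (X 0 ^ 2 * X 1 + X 0 * X 1 ^ 2)) = 0 := by
  induction p using MvPolynomial.induction_on' with
  | monomial d c =>
    have hc : (monomial d c : MvPolynomial (Fin 2) ℤ) = c • monomial d 1 := by
      simp [smul_monomial]
    rw [hc, smul_mul_assoc, map_smul,
      show (monomial d 1 : MvPolynomial (Fin 2) ℤ) * (X 0 ^ 2 * X 1 + X 0 * X 1 ^ 2)
        = monomial d 1 * (X 0 ^ 2 * X 1 ^ 1) + monomial d 1 * (X 0 ^ 1 * X 1 ^ 2) by ring,
      map_add, phi0_mono_shift, phi0_mono_shift, nfid1, smul_zero]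
  | add p q hp hq => rw [add_mul, map_add, hp, hq, add_zero]

lemma phi0_kill2 (p : MvPolynomial (Fin 2) ℤ) :
    phi0 (p * (X 0 ^ 2 + X 1 ^ 2 + X 0 * X 1)) = 0 := by
  induction p using MvPolynomial.induction_on' with
  | monomial d c =>
    have hc : (monomial d c : MvPolynomial (Fin 2) ℤ) = c • monomial d 1 := by
      simp [smul_monomial]
    rw [hc, smul_mul_assoc, map_smul,
      show (monomial d 1 : MvPolynomial (Fin 2) ℤ) * (X 0 ^ 2 + X 1 ^ 2 + X 0 * X 1)
        = monomial d 1 * (X 0 ^ 2 * X 1 ^ 0) + monomial d 1 * (X 0 ^ 0 * X 1 ^ 2)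
          + monomial d 1 * (X 0 ^ 1 * X 1 ^ 1) by ring,
      map_add, map_add, phi0_mono_shift, phi0_mono_shift, phi0_mono_shift,
      add_zero, add_zero, nfid2, smul_zero]
  | add p q hp hq => rw [add_mul, map_add, hp, hq, add_zero]

lemma phi0_kill : ∀ x ∈ thetaIdeal, phi0 x = 0 := by
  intro x hx
  obtain ⟨p, q, rfl⟩ := Ideal.mem_span_pair.mp hx
  rw [map_add, phi0_kill1, phi0_kill2, add_zero]

/-- The coordinate map on the quotient. -/
def phi : RTheta →ₗ[ℤ] (Fin 6 → ℤ) :=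
  (Submodule.liftQ
      ((thetaIdeal : Submodule (MvPolynomial (Fin 2) ℤ) (MvPolynomial (Fin 2) ℤ)).restrictScalars ℤ)
      phi0 (fun x hx => phi0_kill x hx)) ∘ₗ
    (Submodule.Quotient.restrictScalarsEquiv ℤ
      (thetaIdeal : Submodule (MvPolynomial (Fin 2) ℤ) (MvPolynomial (Fin 2) ℤ))).symm.toLinearMap

lemma phi_mk (p : MvPolynomial (Fin 2) ℤ) :
    phi (Ideal.Quotient.mk thetaIdeal p) = phi0 p := rfl

def mons : Fin 6 → MvPolynomial (Fin 2) ℤ := ![1, X 0, X 1, X 0 ^ 2, X 0 * X 1, X 0 ^ 2 * X 1]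

def mvec : Fin 6 → RTheta := fun i => Ideal.Quotient.mk thetaIdeal (mons i)

lemma key (a b : ℕ) :
    Ideal.Quotient.mk thetaIdeal (X 0 ^ a * X 1 ^ b) ∈ Submodule.span ℤ (Set.range mvec) := by
  set S := Submodule.span ℤ (Set.range mvec) with hS
  have hm : ∀ i, mvec i ∈ S := fun i => Submodule.subset_span ⟨i, rfl⟩
  set mk := Ideal.Quotient.mk thetaIdeal with hmk
  set x := mk (X 0) with hx
  set y := mk (X 1) with hy
  have hxy : mk (X 0 ^ a * X 1 ^ b) = x ^ a * y ^ b := by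
    rw [map_mul, map_pow, map_pow]
  have r1 : x ^ 2 * y + x * y ^ 2 = 0 := by
    rw [hx, hy, ← map_pow, ← map_pow, ← map_mul, ← map_mul, ← map_add]
    exact Ideal.Quotient.eq_zero_iff_mem.mpr (Ideal.subset_span (Set.mem_insert _ _))
  have r2 : x ^ 2 + y ^ 2 + x * y = 0 := by
    rw [hx, hy, ← map_pow, ← map_pow, ← map_mul, ← map_add, ← map_add]
    exact Ideal.Quotient.eq_zero_iff_mem.mpr
      (Ideal.subset_span (Set.mem_insert_of_mem _ rfl))
  have hx3 : x ^ 3 = 0 := by linear_combination x * r2 - r1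
  have hy3 : y ^ 3 = 0 := by linear_combination y * r2 - r1
  have hx2y2 : x ^ 2 * y ^ 2 = 0 := by linear_combination (x + y) * r1 - x * y * r2
  have e0 : mvec 0 = 1 := by show mk 1 = 1; exact map_one mk
  have e1 : mvec 1 = x := by show mk (X 0) = x; rw [hx]
  have e2 : mvec 2 = y := by show mk (X 1) = y; rw [hy]
  have e3 : mvec 3 = x ^ 2 := by show mk (X 0 ^ 2) = x ^ 2; rw [map_pow, hx]
  have e4 : mvec 4 = x * y := by show mk (X 0 * X 1) = x * y; rw [map_mul, hx, hy]
  have e5 : mvec 5 = x ^ 2 * y := by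
    show mk (X 0 ^ 2 * X 1) = x ^ 2 * y; rw [map_mul, map_pow, hx, hy]
  rw [hxy]
  rcases a with _|_|_|a
  · rcases b with _|_|_|b
    · convert hm 0 using 1; rw [e0]; ring
    · convert hm 2 using 1; rw [e2]; ring
    · have h : x ^ 0 * y ^ 2 = -(mvec 3) - mvec 4 := by
        rw [e3, e4]; linear_combination r2
      rw [h]; exact sub_mem (neg_mem (hm 3)) (hm 4)
    · have h : x ^ 0 * y ^ (b + 3) = 0 := by
        rw [pow_add, hy3, mul_zero, mul_zero]
      rw [h]; exact zero_mem S
  · rcases b with _|_|_|b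
    · convert hm 1 using 1; rw [e1]; ring
    · convert hm 4 using 1; rw [e4]; ring
    · have h : x ^ 1 * y ^ 2 = -(mvec 5) := by rw [e5]; linear_combination r1
      rw [h]; exact neg_mem (hm 5)
    · have h : x ^ 1 * y ^ (b + 3) = 0 := by
        rw [pow_add, hy3, mul_zero, mul_zero]
      rw [h]; exact zero_mem S
  · rcases b with _|_|b
    · convert hm 3 using 1; rw [e3]; ring
    · convert hm 5 using 1; rw [e5]; ring
    · have h : x ^ 2 * y ^ (b + 2) = x ^ 2 * y ^ 2 * y ^ b := by ring
      rw [h, hx2y2, zero_mul]; exact zero_mem S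
  · have h : x ^ (a + 3) * y ^ b = x ^ 3 * (x ^ a * y ^ b) := by ring
    rw [h, hx3, zero_mul]; exact zero_mem S

lemma span_top : Submodule.span ℤ (Set.range mvec) = ⊤ := by
  rw [eq_top_iff]
  rintro z -
  obtain ⟨p, rfl⟩ := Ideal.Quotient.mk_surjective z
  induction p using MvPolynomial.induction_on' with
  | monomial d c =>
    have hd : (monomial d c : MvPolynomial (Fin 2) ℤ) = c • (X 0 ^ (d 0) * X 1 ^ (d 1)) := by
      have h1 : d = Finsupp.single 0 (d 0) + Finsupp.single 1 (d 1) := by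
        ext i; fin_cases i <;> simp [Finsupp.single_apply]
      rw [X_pow_eq_monomial, X_pow_eq_monomial, monomial_mul, one_mul, smul_monomial, smul_eq_mul,
        mul_one, ← h1]
    rw [hd, map_zsmul]
    exact Submodule.smul_mem _ c (key (d 0) (d 1))
  | add p q hp hq => rw [map_add]; exact add_mem hp hq

lemma phi_mvec (i : Fin 6) : phi (mvec i) = Pi.single i (1 : ℤ) := by
  have pm0 : phi (mvec 0) = nf 0 0 := by
    have h : phi (mvec 0) = phi0 (1 : MvPolynomial (Fin 2) ℤ) := rfl
    rw [h]; simpa using phi0_pow 0 0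
  have pm1 : phi (mvec 1) = nf 1 0 := by
    have h : phi (mvec 1) = phi0 (X 0 : MvPolynomial (Fin 2) ℤ) := rfl
    rw [h]; simpa using phi0_pow 1 0
  have pm2 : phi (mvec 2) = nf 0 1 := by
    have h : phi (mvec 2) = phi0 (X 1 : MvPolynomial (Fin 2) ℤ) := rfl
    rw [h]; simpa using phi0_pow 0 1
  have pm3 : phi (mvec 3) = nf 2 0 := by
    have h : phi (mvec 3) = phi0 (X 0 ^ 2 : MvPolynomial (Fin 2) ℤ) := rfl
    rw [h]; simpa using phi0_pow 2 0
  have pm4 : phi (mvec 4) = nf 1 1 := by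
    have h : phi (mvec 4) = phi0 (X 0 * X 1 : MvPolynomial (Fin 2) ℤ) := rfl
    rw [h]; simpa using phi0_pow 1 1
  have pm5 : phi (mvec 5) = nf 2 1 := by
    have h : phi (mvec 5) = phi0 (X 0 ^ 2 * X 1 : MvPolynomial (Fin 2) ℤ) := rfl
    rw [h]; simpa using phi0_pow 2 1
  fin_cases i
  · exact pm0.trans (by funext j; fin_cases j <;> simp [nf, Pi.single_apply] <;> decide)
  · exact pm1.trans (by funext j; fin_cases j <;> simp [nf, Pi.single_apply] <;> decide)
  · exact pm2.trans (by funext j; fin_cases j <;> simp [nf, Pi.single_apply] <;> decide)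
  · exact pm3.trans (by funext j; fin_cases j <;> simp [nf, Pi.single_apply] <;> decide)
  · exact pm4.trans (by funext j; fin_cases j <;> simp [nf, Pi.single_apply] <;> decide)
  · exact pm5.trans (by funext j; fin_cases j <;> simp [nf, Pi.single_apply] <;> decide)

lemma mvec_indep : LinearIndependent ℤ mvec := by
  apply LinearIndependent.of_comp phi
  have h : phi ∘ mvec = ⇑(Pi.basisFun ℤ (Fin 6)) := by
    funext i
    rw [Function.comp_apply, phi_mvec i, Pi.basisFun_apply]
  rw [h]
  exact (Pi.basisFun ℤ (Fin 6)).linearIndependent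

/-- The basis of `R_Θ` given by the residue classes of `1, x, y, x², xy, x²y`. -/
def thetaBasis : Module.Basis (Fin 6) ℤ RTheta := Module.Basis.mk mvec_indep (le_of_eq span_top.symm)

/-- `R_Θ` is a free `ℤ`-module of rank 6, with basis the residue classes of the
monomials `1, X₁, X₂, X₁², X₁X₂, X₁²X₂`. -/
theorem RTheta_free_rank_six :
    Module.Free ℤ RTheta ∧ Module.rank ℤ RTheta = 6 ∧
    ∃ B : Module.Basis (Fin 6) ℤ RTheta, ∀ i : Fin 6,
      B i = Ideal.Quotient.mk thetaIdeal
        (![1, X 0, X 1, X 0 ^ 2, X 0 * X 1, X 0 ^ 2 * X 1] i) := by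
  refine ⟨Module.Free.of_basis thetaBasis, ?_, thetaBasis, ?_⟩
  · rw [rank_eq_card_basis thetaBasis]
    simp
  · intro i
    rw [thetaBasis, Module.Basis.mk_apply]
    rfl

end
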